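/- Let K > 0, r ∈ ℝ, σ > 0, T > 0. Define d₁(x,t) = (ln(x/K) + (r + σ²/2)(T−t))/(σ√(T−t)), d₂(x,t) = d₁(x,t) − σ√(T−t), and u(x,t) = x·N(d₁(x,t)) − K·e^{−r(T−t)}·N(d₂(x,t)), where N is the standard normal CDF. Then for all x > 0 and t < T, u satisfies the Black-Scholes equation u_t + (1/2)σ²x²u_xx + r·x·u_x − r·u = 0. -/

import Mathlib

open Real MeasureTheory

noncomputable def pdx (u : ℝ → ℝ → ℝ) (x t : ℝ) : ℝ := deriv (fun x' => u x' t) x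
noncomputable def pdt (u : ℝ → ℝ → ℝ) (x t : ℝ) : ℝ := deriv (fun t' => u x t') t
noncomputable def pdxx (u : ℝ → ℝ → ℝ) (x t : ℝ) : ℝ := deriv (fun x' => pdx u x' t) x

noncomputable def stdNormalCDF (z : ℝ) : ℝ :=
  (Real.sqrt (2 * Real.pi))⁻¹ * ∫ s in Set.Iic z, Real.exp (-(s ^ 2) / 2)

noncomputable def nphi (z : ℝ) : ℝ := (Real.sqrt (2 * Real.pi))⁻¹ * Real.exp (-(z ^ 2) / 2)

lemma gauss_integrable : Integrable (fun s : ℝ => Real.exp (-(s ^ 2) / 2)) := by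
  have h := integrable_exp_neg_mul_sq (show (0:ℝ) < 1/2 by norm_num)
  convert h using 2 with s
  ring_nf

lemma hasDerivAt_cdf (z : ℝ) : HasDerivAt stdNormalCDF (nphi z) z := by
  have hint := gauss_integrable
  have hcont : Continuous fun s : ℝ => Real.exp (-(s ^ 2) / 2) := by continuity
  have h1 : ∀ w : ℝ, stdNormalCDF w = (Real.sqrt (2*Real.pi))⁻¹ *
      ((∫ s in Set.Iic (0:ℝ), Real.exp (-(s^2)/2)) + ∫ s in (0:ℝ)..w, Real.exp (-(s^2)/2)) := by
    intro w
    rw [stdNormalCDF]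
    congr 1
    rw [← intervalIntegral.integral_Iic_sub_Iic hint.integrableOn hint.integrableOn]
    ring
  have h2 : HasDerivAt (fun w => ∫ s in (0:ℝ)..w, Real.exp (-(s^2)/2)) (Real.exp (-(z^2)/2)) z :=
    intervalIntegral.integral_hasDerivAt_right hint.intervalIntegrable
      (hcont.stronglyMeasurableAtFilter _ _) hcont.continuousAt
  have h3 := (h2.const_add (∫ s in Set.Iic (0:ℝ), Real.exp (-(s^2)/2))).const_mul
      ((Real.sqrt (2*Real.pi))⁻¹)
  exact h3.congr_of_eventuallyEq (Filter.Eventually.of_forall h1)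

theorem stmt5 (K r σ T : ℝ) (hK : 0 < K) (hσ : 0 < σ) (hT : 0 < T) :
    ∀ x : ℝ, 0 < x → ∀ t : ℝ, t < T →
      pdt (fun x' t' =>
          x' * stdNormalCDF ((Real.log (x' / K) + (r + σ ^ 2 / 2) * (T - t')) / (σ * Real.sqrt (T - t')))
          - K * Real.exp (-r * (T - t'))
            * stdNormalCDF ((Real.log (x' / K) + (r + σ ^ 2 / 2) * (T - t')) / (σ * Real.sqrt (T - t'))
                - σ * Real.sqrt (T - t'))) x t
      + (1 / 2) * σ ^ 2 * x ^ 2 * pdxx (fun x' t' =>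
          x' * stdNormalCDF ((Real.log (x' / K) + (r + σ ^ 2 / 2) * (T - t')) / (σ * Real.sqrt (T - t')))
          - K * Real.exp (-r * (T - t'))
            * stdNormalCDF ((Real.log (x' / K) + (r + σ ^ 2 / 2) * (T - t')) / (σ * Real.sqrt (T - t'))
                - σ * Real.sqrt (T - t'))) x t
      + r * x * pdx (fun x' t' =>
          x' * stdNormalCDF ((Real.log (x' / K) + (r + σ ^ 2 / 2) * (T - t')) / (σ * Real.sqrt (T - t')))
          - K * Real.exp (-r * (T - t'))
            * stdNormalCDF ((Real.log (x' / K) + (r + σ ^ 2 / 2) * (T - t')) / (σ * Real.sqrt (T - t'))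
                - σ * Real.sqrt (T - t'))) x t
      - r * (x * stdNormalCDF ((Real.log (x / K) + (r + σ ^ 2 / 2) * (T - t)) / (σ * Real.sqrt (T - t)))
          - K * Real.exp (-r * (T - t))
            * stdNormalCDF ((Real.log (x / K) + (r + σ ^ 2 / 2) * (T - t)) / (σ * Real.sqrt (T - t))
                - σ * Real.sqrt (T - t)))
      = 0 := by
  intro x hx t ht
  set u := (fun x' t' : ℝ =>
          x' * stdNormalCDF ((Real.log (x' / K) + (r + σ ^ 2 / 2) * (T - t')) / (σ * Real.sqrt (T - t')))
          - K * Real.exp (-r * (T - t'))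
            * stdNormalCDF ((Real.log (x' / K) + (r + σ ^ 2 / 2) * (T - t')) / (σ * Real.sqrt (T - t'))
                - σ * Real.sqrt (T - t'))) with hu
  have hτ : 0 < T - t := sub_pos.2 ht
  have hs : 0 < Real.sqrt (T - t) := Real.sqrt_pos.2 hτ
  have hs2 : Real.sqrt (T - t) ^ 2 = T - t := Real.sq_sqrt hτ.le
  have hσs : σ * Real.sqrt (T - t) ≠ 0 := (mul_pos hσ hs).ne'
  -- the key identity
  have key : ∀ y : ℝ, 0 < y →
      y * nphi ((Real.log (y / K) + (r + σ ^ 2 / 2) * (T - t)) / (σ * Real.sqrt (T - t)))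
      = K * Real.exp (-r * (T - t)) *
        nphi ((Real.log (y / K) + (r + σ ^ 2 / 2) * (T - t)) / (σ * Real.sqrt (T - t))
              - σ * Real.sqrt (T - t)) := by
    intro y hy
    have hyK : 0 < y / K := div_pos hy hK
    have hL : Real.exp (Real.log (y / K)) = y / K := Real.exp_log hyK
    have hd : ((Real.log (y / K) + (r + σ ^ 2 / 2) * (T - t)) / (σ * Real.sqrt (T - t)))
        * (σ * Real.sqrt (T - t)) = Real.log (y / K) + (r + σ ^ 2 / 2) * (T - t) :=
      div_mul_cancel₀ _ hσs
    set d := (Real.log (y / K) + (r + σ ^ 2 / 2) * (T - t)) / (σ * Real.sqrt (T - t)) with hdd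
    unfold nphi
    have hy' : y = K * Real.exp (Real.log (y / K)) := by
      rw [hL]; field_simp
    have hssq : Real.sqrt (T-t) * Real.sqrt (T-t) = T - t := by nlinarith [hs2]
    have main : y * Real.exp (-(d^2)/2)
        = K * Real.exp (-r*(T-t)) * Real.exp (-((d - σ*Real.sqrt (T-t))^2)/2) := by
      rw [hy', mul_assoc, ← Real.exp_add, mul_assoc, ← Real.exp_add]
      congr 1
      rw [Real.exp_eq_exp]
      linear_combination (σ^2/2) * hssq - hd
    linear_combination (Real.sqrt (2*Real.pi))⁻¹ * main
  -- x-derivative of d1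
  have hd1x : ∀ y : ℝ, 0 < y → HasDerivAt
      (fun x' => (Real.log (x' / K) + (r + σ ^ 2 / 2) * (T - t)) / (σ * Real.sqrt (T - t)))
      (1 / y / (σ * Real.sqrt (T - t))) y := by
    intro y hy
    have h0 : HasDerivAt (fun x' : ℝ => x' / K) (1 / K) y := by
      simpa using (hasDerivAt_id y).div_const K
    have hlog : HasDerivAt (fun x' : ℝ => Real.log (x' / K)) (1 / y) y := by
      have h := (Real.hasDerivAt_log (by positivity : y / K ≠ 0)).comp y h0
      refine h.congr_deriv ?_
      field_simp
    exact (hlog.add_const _).div_const _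
  -- x-derivative of u
  have hDx : ∀ y : ℝ, 0 < y → HasDerivAt (fun x' => u x' t)
      (stdNormalCDF ((Real.log (y / K) + (r + σ ^ 2 / 2) * (T - t)) / (σ * Real.sqrt (T - t)))) y := by
    intro y hy
    have hN1 := (hasDerivAt_cdf _).comp y (hd1x y hy)
    have hN2 := (hasDerivAt_cdf _).comp y ((hd1x y hy).sub_const (σ * Real.sqrt (T - t)))
    have h := ((hasDerivAt_id y).mul hN1).sub
      ((hN2.const_mul (K * Real.exp (-r * (T - t)))))
    have hder : 1 * stdNormalCDF ((Real.log (y / K) + (r + σ ^ 2 / 2) * (T - t)) / (σ * Real.sqrt (T - t)))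
        + y * (nphi ((Real.log (y / K) + (r + σ ^ 2 / 2) * (T - t)) / (σ * Real.sqrt (T - t)))
            * (1 / y / (σ * Real.sqrt (T - t))))
        - K * Real.exp (-r * (T - t)) *
            (nphi ((Real.log (y / K) + (r + σ ^ 2 / 2) * (T - t)) / (σ * Real.sqrt (T - t))
              - σ * Real.sqrt (T - t)) * (1 / y / (σ * Real.sqrt (T - t))))
        = stdNormalCDF ((Real.log (y / K) + (r + σ ^ 2 / 2) * (T - t)) / (σ * Real.sqrt (T - t))) := by
      linear_combination (1 / y / (σ * Real.sqrt (T - t))) * key y hy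
    simp only [Function.comp_def, id_eq] at h
    rw [hder] at h
    exact h
  have hpdx : ∀ y : ℝ, 0 < y → pdx u y t
      = stdNormalCDF ((Real.log (y / K) + (r + σ ^ 2 / 2) * (T - t)) / (σ * Real.sqrt (T - t))) :=
    fun y hy => (hDx y hy).deriv
  have hpdxx : pdxx u x t
      = nphi ((Real.log (x / K) + (r + σ ^ 2 / 2) * (T - t)) / (σ * Real.sqrt (T - t)))
        * (1 / x / (σ * Real.sqrt (T - t))) := by
    have hev : (fun y => pdx u y t) =ᶠ[nhds x]
        (fun y => stdNormalCDF ((Real.log (y / K) + (r + σ ^ 2 / 2) * (T - t)) / (σ * Real.sqrt (T - t)))) := by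
      filter_upwards [eventually_gt_nhds hx] with y hy using hpdx y hy
    show deriv (fun y => pdx u y t) x = _
    rw [hev.deriv_eq]
    exact ((hasDerivAt_cdf _).comp x (hd1x x hx)).deriv
  -- t-derivatives
  have hτ't : HasDerivAt (fun t' : ℝ => T - t') (-1) t := by
    simpa using (hasDerivAt_id t).const_sub T
  have hsq : HasDerivAt (fun t' : ℝ => Real.sqrt (T - t')) (-1 / (2 * Real.sqrt (T - t))) t :=
    hτ't.sqrt hτ.ne'
  have hnum : HasDerivAt (fun t' : ℝ => Real.log (x / K) + (r + σ ^ 2 / 2) * (T - t'))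
      ((r + σ ^ 2 / 2) * -1) t := (hτ't.const_mul _).const_add _
  have hden : HasDerivAt (fun t' : ℝ => σ * Real.sqrt (T - t'))
      (σ * (-1 / (2 * Real.sqrt (T - t)))) t := hsq.const_mul σ
  have hd1t := hnum.div hden hσs
  have hd2t := hd1t.sub hden
  have hE : HasDerivAt (fun t' : ℝ => Real.exp (-r * (T - t')))
      (Real.exp (-r * (T - t)) * (-r * -1)) t := (hτ't.const_mul (-r)).exp
  have hN1t := (hasDerivAt_cdf _).comp t hd1t
  have hN2t := (hasDerivAt_cdf _).comp t hd2t
  have hut := (hN1t.const_mul x).sub ((hE.const_mul K).mul hN2t)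
  have hpdt : pdt u x t = _ := hut.deriv
  simp only [Function.comp_apply] at hpdt
  have h3 : (1/2) * σ^2 * x^2 *
      (nphi ((Real.log (x / K) + (r + σ ^ 2 / 2) * (T - t)) / (σ * Real.sqrt (T - t)))
        * (1 / x / (σ * Real.sqrt (T - t))))
      = σ * x * nphi ((Real.log (x / K) + (r + σ ^ 2 / 2) * (T - t)) / (σ * Real.sqrt (T - t)))
          / (2 * Real.sqrt (T - t)) := by
    field_simp
  rw [hpdt, hpdxx, hpdx x hx, h3]
  linear_combination
    (((r + σ ^ 2 / 2) * -1 * (σ * Real.sqrt (T - t))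
        - (Real.log (x / K) + (r + σ ^ 2 / 2) * (T - t)) * (σ * (-1 / (2 * Real.sqrt (T - t)))))
        / (σ * Real.sqrt (T - t)) ^ 2
      + σ / (2 * Real.sqrt (T - t))) * key x hx
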